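/- Let D = 2^s be a power of 2, let r be an integer with 0 ≤ r < D, and let ζ := e^{πi/D}. Then Σ_{ρ binary partition of r} h_{B,ρ}(ζ) ≠ 0; in fact all the nonzero complex numbers h_{B,ρ}(ζ) lie on a single open ray from the origin (they all have argument (π/(2D))·(Σ_{2^k≤r} 2^k·⌊r/2^k⌋ − r)). -/

import Mathlib

open Polynomial Finset
open scoped Classical

/-- The binary partitions of `n`: partitions of `n` all of whose parts are powers of `2`. -/
noncomputable def binParts (n : ℕ) : Finset (Nat.Partition n) :=
  Finset.univ.filter (fun μ => ∀ i ∈ μ.parts, ∃ k : ℕ, i = 2 ^ k)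

/-- `h_{B,λ}(x) = ∏_{k ≥ 0, 2^k ≤ n} (1+x^{2^k})^(⌊n/2^k⌋ - m_λ(2^k))` in `ℤ[x]`. -/
noncomputable def hB (n : ℕ) (μ : Nat.Partition n) : Polynomial ℤ :=
  ∏ k ∈ (Finset.range (n + 1)).filter (fun k => 2 ^ k ≤ n),
    (1 + X ^ (2 ^ k)) ^ (n / 2 ^ k - μ.parts.count (2 ^ k))

/-- `G_B(n,x)`: the (normalized) gcd of the `h_{B,λ}(x)` over binary partitions `λ` of `n`. -/
noncomputable def GB (n : ℕ) : Polynomial ℤ :=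
  (binParts n).gcd (hB n)

theorem GB_dvd_sum (n : ℕ) :
    ∃ q : Polynomial ℤ, (∑ μ ∈ binParts n, hB n μ) = GB n * q :=
  exists_eq_mul_right_of_dvd (Finset.dvd_sum fun _ hμ => Finset.gcd_dvd hμ)

/-- `num_B(n,x) = (∑_{λ binary partition of n} h_{B,λ}(x)) / G_B(n,x)`. -/
noncomputable def numB (n : ℕ) : Polynomial ℤ :=
  (GB_dvd_sum n).choose

/-- The all-ones partition of `n`. -/
def onesPartition (n : ℕ) : Nat.Partition n :=
  Nat.Partition.ofSums n (Multiset.replicate n 1) (by simp)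

theorem onesPartition_mem_binParts (n : ℕ) : onesPartition n ∈ binParts n := by
  simp only [binParts, Finset.mem_filter, Finset.mem_univ, true_and]
  intro i hi
  have h1 : i = 1 := by
    rw [onesPartition, Nat.Partition.ofSums_parts] at hi
    exact Multiset.eq_of_mem_replicate (Multiset.mem_filter.mp hi).1
  exact ⟨0, by simp [h1]⟩

theorem GB_dvd_prod (n : ℕ) :
    ∃ q : Polynomial ℤ,
      (∏ k ∈ (Finset.range (n + 1)).filter (fun k => 2 ^ k ≤ n),
          ((1 : Polynomial ℤ) + X ^ (2 ^ k)) ^ (n / 2 ^ k)) = GB n * q :=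
  exists_eq_mul_right_of_dvd <|
    dvd_trans (Finset.gcd_dvd (onesPartition_mem_binParts n))
      (Finset.prod_dvd_prod_of_dvd _ _ fun _ _ => pow_dvd_pow _ (Nat.sub_le _ _))

/-- `den_B(n,x) = (∏_{k ≥ 0, 2^k ≤ n} (1+x^{2^k})^⌊n/2^k⌋) / G_B(n,x)`. -/
noncomputable def denB (n : ℕ) : Polynomial ℤ :=
  (GB_dvd_prod n).choose

noncomputable def myθ (s k : ℕ) : ℝ := 2 ^ k * (Real.pi / (2 * 2 ^ s))

lemma one_add_exp_two_mul (θ : ℝ) :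
    1 + Complex.exp (2 * θ * Complex.I) =
      2 * Real.cos θ * Complex.exp (θ * Complex.I) := by
  have h : (2 * (θ:ℂ) * Complex.I) = ((2*θ:ℝ):ℂ) * Complex.I := by push_cast; ring
  rw [h, Complex.exp_mul_I, Complex.exp_mul_I, ← Complex.ofReal_cos, ← Complex.ofReal_sin,
    ← Complex.ofReal_cos, ← Complex.ofReal_sin, Real.cos_two_mul, Real.sin_two_mul]
  push_cast
  ring

lemma zeta_pow (s k : ℕ) :
    (Complex.exp (Real.pi * Complex.I / ((2 ^ s : ℕ) : ℂ))) ^ (2 ^ k) =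
      Complex.exp (2 * (myθ s k : ℝ) * Complex.I) := by
  rw [← Complex.exp_nat_mul]
  congr 1
  have h2 : ((2:ℂ))^s ≠ 0 := pow_ne_zero _ two_ne_zero
  have h2' : (2 * (2:ℝ)^s) ≠ 0 := by positivity
  rw [myθ]
  push_cast
  field_simp

lemma factor_eq (s k : ℕ) :
    1 + (Complex.exp (Real.pi * Complex.I / ((2 ^ s : ℕ) : ℂ))) ^ (2 ^ k) =
      2 * Real.cos (myθ s k) * Complex.exp ((myθ s k : ℝ) * Complex.I) := by
  rw [zeta_pow, one_add_exp_two_mul]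

lemma myθ_pos (s k : ℕ) : 0 < myθ s k := by
  have := Real.pi_pos
  rw [myθ]; positivity

lemma myθ_lt (s r k : ℕ) (hr : r < 2 ^ s) (hk : 2 ^ k ≤ r) :
    myθ s k < Real.pi / 2 := by
  have h1 : (2:ℝ)^k < 2^s := by exact_mod_cast lt_of_le_of_lt hk hr
  have h2 : (0:ℝ) < Real.pi / (2 * 2 ^ s) := by
    have := Real.pi_pos; positivity
  have h3 : myθ s k < 2^s * (Real.pi / (2 * 2 ^ s)) :=
    mul_lt_mul_of_pos_right h1 h2
  have h4 : (2:ℝ)^s * (Real.pi / (2 * 2 ^ s)) = Real.pi / 2 := by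
    have : (2:ℝ)^s ≠ 0 := by positivity
    field_simp
  rwa [h4] at h3

lemma cos_myθ_pos (s r k : ℕ) (hr : r < 2 ^ s) (hk : 2 ^ k ≤ r) :
    0 < Real.cos (myθ s k) := by
  apply Real.cos_pos_of_mem_Ioo
  constructor
  · linarith [myθ_pos s k, Real.pi_pos]
  · exact myθ_lt s r k hr hk

lemma binPart_sum (r : ℕ) (ρ : Nat.Partition r) (hρ : ρ ∈ binParts r) :
    ∑ k ∈ (Finset.range (r+1)).filter (fun k => 2^k ≤ r),
      ρ.parts.count (2^k) * 2^k = r := by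
  have hbin : ∀ i ∈ ρ.parts, ∃ k : ℕ, i = 2 ^ k := by
    simpa [binParts] using hρ
  have hsum : ρ.parts.sum = ∑ i ∈ ρ.parts.toFinset, ρ.parts.count i • i := by
    conv_lhs => rw [← Multiset.map_id ρ.parts]
    exact Finset.sum_multiset_map_count ρ.parts id
  have himg : ∑ k ∈ (Finset.range (r+1)).filter (fun k => 2^k ≤ r),
      ρ.parts.count (2^k) * 2^k
      = ∑ i ∈ ((Finset.range (r+1)).filter (fun k => 2^k ≤ r)).image (fun k => 2^k),
          ρ.parts.count i * i := by
    rw [Finset.sum_image]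
    intro a _ b _ h
    exact Nat.pow_right_injective le_rfl h
  have hsub : ρ.parts.toFinset ⊆
      ((Finset.range (r+1)).filter (fun k => 2^k ≤ r)).image (fun k => 2^k) := by
    intro i hi
    rw [Multiset.mem_toFinset] at hi
    obtain ⟨k, rfl⟩ := hbin i hi
    have hle : 2^k ≤ r := by
      have := Multiset.single_le_sum (fun x _ => Nat.zero_le x) _ hi
      rwa [ρ.parts_sum] at this
    refine Finset.mem_image.mpr ⟨k, Finset.mem_filter.mpr ⟨?_, hle⟩, rfl⟩
    exact Finset.mem_range.mpr (Nat.lt_succ_of_le ((show k < 2 ^ k by exact Nat.lt_two_pow_self).le.trans hle))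
  have hz : ∀ i ∈ ((Finset.range (r+1)).filter (fun k => 2^k ≤ r)).image (fun k => 2^k),
      i ∉ ρ.parts.toFinset → ρ.parts.count i * i = 0 := by
    intro i _ hi
    rw [Multiset.count_eq_zero_of_notMem (by simpa using hi), zero_mul]
  rw [himg, ← Finset.sum_subset hsub hz]
  calc ∑ x ∈ ρ.parts.toFinset, ρ.parts.count x * x
      = ∑ x ∈ ρ.parts.toFinset, ρ.parts.count x • x := by simp [smul_eq_mul]
    _ = ρ.parts.sum := hsum.symm
    _ = r := ρ.parts_sum

lemma count_le (n : ℕ) (μ : Nat.Partition n) (i : ℕ) (hi : 0 < i) :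
    μ.parts.count i ≤ n / i := by
  obtain ⟨u, hu⟩ := Multiset.le_iff_exists_add.mp
    (Multiset.le_count_iff_replicate_le.mp (le_refl (μ.parts.count i)))
  have h2 : μ.parts.count i * i ≤ n := by
    conv_rhs => rw [← μ.parts_sum]
    conv_rhs => rw [hu]
    rw [Multiset.sum_add, Multiset.sum_replicate, smul_eq_mul]
    exact Nat.le_add_right _ _
  exact Nat.le_div_iff_mul_le hi |>.mpr h2

lemma hB_eval (s r : ℕ) (hr : r < 2 ^ s) (ρ : Nat.Partition r) (hρ : ρ ∈ binParts r) :
    ∃ c : ℝ, 0 < c ∧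
      Polynomial.aeval (Complex.exp (Real.pi * Complex.I / ((2 ^ s : ℕ) : ℂ))) (hB r ρ) =
        (c : ℂ) * Complex.exp
          ((((Real.pi / (2 * (2 ^ s : ℕ))) *
              (((∑ k ∈ (Finset.range (r + 1)).filter (fun k => 2 ^ k ≤ r),
                  2 ^ k * (r / 2 ^ k) : ℕ) : ℝ) - (r : ℝ))) : ℝ) * Complex.I) := by
  set K := (Finset.range (r + 1)).filter (fun k => 2 ^ k ≤ r) with hK
  set ζ := Complex.exp (Real.pi * Complex.I / ((2 ^ s : ℕ) : ℂ)) with hζ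
  set e : ℕ → ℕ := fun k => r / 2 ^ k - ρ.parts.count (2 ^ k) with he
  refine ⟨∏ k ∈ K, (2 * Real.cos (myθ s k)) ^ (e k), ?_, ?_⟩
  · apply Finset.prod_pos
    intro k hk
    have hk2 : 2 ^ k ≤ r := (Finset.mem_filter.mp hk).2
    exact pow_pos (by linarith [cos_myθ_pos s r k hr hk2]) _
  · have h1 : Polynomial.aeval ζ (hB r ρ) = ∏ k ∈ K, (1 + ζ ^ (2 ^ k)) ^ (e k) := by
      simp [hB, hK, he]
    have h2 : ∀ k ∈ K, (1 + ζ ^ (2 ^ k)) ^ (e k) =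
        ((2 * Real.cos (myθ s k)) ^ (e k) : ℝ) *
          Complex.exp (((e k * myθ s k : ℝ) : ℂ) * Complex.I) := by
      intro k _
      rw [hζ, factor_eq, mul_pow, ← Complex.exp_nat_mul]
      push_cast
      ring_nf
    rw [h1, Finset.prod_congr rfl h2, Finset.prod_mul_distrib, ← Complex.exp_sum]
    congr 1
    · push_cast; ring
    -- exponent equality
    have hle : ∀ k ∈ K, ρ.parts.count (2 ^ k) * 2 ^ k ≤ (r / 2 ^ k) * 2 ^ k := by
      intro k _
      exact Nat.mul_le_mul_right _ (count_le r ρ (2 ^ k) (Nat.two_pow_pos k))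
    have hnat : ∑ k ∈ K, e k * 2 ^ k
        = (∑ k ∈ K, (r / 2 ^ k) * 2 ^ k) - (∑ k ∈ K, ρ.parts.count (2 ^ k) * 2 ^ k) := by
      rw [← Finset.sum_tsub_distrib K hle]
      exact Finset.sum_congr rfl fun k _ => by rw [he]; exact Nat.sub_mul _ _ _
    have hcnt : ∑ k ∈ K, ρ.parts.count (2 ^ k) * 2 ^ k = r := binPart_sum r ρ hρ
    have hrA : r ≤ ∑ k ∈ K, (r / 2 ^ k) * 2 ^ k := by
      calc r = ∑ k ∈ K, ρ.parts.count (2 ^ k) * 2 ^ k := hcnt.symm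
        _ ≤ _ := Finset.sum_le_sum hle
    have hAS : (∑ k ∈ K, (r / 2 ^ k) * 2 ^ k) = ∑ k ∈ K, 2 ^ k * (r / 2 ^ k) :=
      Finset.sum_congr rfl fun k _ => Nat.mul_comm _ _
    have hreal : ∑ k ∈ K, (e k : ℝ) * myθ s k =
        (Real.pi / (2 * ((2 ^ s : ℕ) : ℝ))) *
          (((∑ k ∈ K, 2 ^ k * (r / 2 ^ k) : ℕ) : ℝ) - (r : ℝ)) := by
      have step1 : ∑ k ∈ K, (e k : ℝ) * myθ s k
          = ((∑ k ∈ K, e k * 2 ^ k : ℕ) : ℝ) * (Real.pi / (2 * 2 ^ s)) := by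
        push_cast
        rw [Finset.sum_mul]
        exact Finset.sum_congr rfl fun k _ => by rw [myθ]; ring
      rw [step1, hnat, hcnt, Nat.cast_sub (hAS ▸ hrA), hAS]
      push_cast
      ring
    rw [← hreal]
    push_cast
    rw [Finset.sum_mul]

/-- Let `D = 2^s` be a power of `2`, let `0 ≤ r < D`, and let `ζ := e^{πi/D}`.
Then `Σ_{ρ binary partition of r} h_{B,ρ}(ζ) ≠ 0`; in fact all the nonzero complex numbers
`h_{B,ρ}(ζ)` lie on a single open ray from the origin: each of them equals a positive real
multiple of `exp(iθ)`, where `θ = (π/(2D)) · (Σ_{2^k ≤ r} 2^k·⌊r/2^k⌋ − r)`. -/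
theorem binary_same_ray (s r : ℕ) (hr : r < 2 ^ s) :
    (∑ ρ ∈ binParts r,
        Polynomial.aeval (Complex.exp (Real.pi * Complex.I / ((2 ^ s : ℕ) : ℂ))) (hB r ρ)) ≠ 0 ∧
      ∀ ρ ∈ binParts r,
        Polynomial.aeval (Complex.exp (Real.pi * Complex.I / ((2 ^ s : ℕ) : ℂ))) (hB r ρ) ≠ 0 →
        ∃ c : ℝ, 0 < c ∧
          Polynomial.aeval (Complex.exp (Real.pi * Complex.I / ((2 ^ s : ℕ) : ℂ))) (hB r ρ) =
            (c : ℂ) * Complex.exp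
              ((((Real.pi / (2 * (2 ^ s : ℕ))) *
                  (((∑ k ∈ (Finset.range (r + 1)).filter (fun k => 2 ^ k ≤ r),
                      2 ^ k * (r / 2 ^ k) : ℕ) : ℝ) - (r : ℝ))) : ℝ) * Complex.I) := by
  have key := fun ρ (hρ : ρ ∈ binParts r) => hB_eval s r hr ρ hρ
  choose c hc hval using key
  constructor
  · have hsum : (∑ ρ ∈ binParts r,
        Polynomial.aeval (Complex.exp (Real.pi * Complex.I / ((2 ^ s : ℕ) : ℂ))) (hB r ρ))
        = ((∑ ρ ∈ (binParts r).attach, c ρ ρ.2 : ℝ) : ℂ) *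
          Complex.exp
            ((((Real.pi / (2 * (2 ^ s : ℕ))) *
                (((∑ k ∈ (Finset.range (r + 1)).filter (fun k => 2 ^ k ≤ r),
                    2 ^ k * (r / 2 ^ k) : ℕ) : ℝ) - (r : ℝ))) : ℝ) * Complex.I) := by
      rw [← Finset.sum_attach (binParts r)
        (fun ρ => Polynomial.aeval (Complex.exp (Real.pi * Complex.I / ((2 ^ s : ℕ) : ℂ))) (hB r ρ))]
      rw [Complex.ofReal_sum, Finset.sum_mul]
      exact Finset.sum_congr rfl fun ρ _ => hval ρ ρ.2
    rw [hsum]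
    apply mul_ne_zero
    · refine Complex.ofReal_ne_zero.mpr (ne_of_gt (Finset.sum_pos (fun ρ _ => hc ρ ρ.2) ?_))
      exact Finset.attach_nonempty_iff.mpr ⟨onesPartition r, onesPartition_mem_binParts r⟩
    · exact Complex.exp_ne_zero _
  · intro ρ hρ _
    exact ⟨c ρ hρ, hc ρ hρ, hval ρ hρ⟩
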